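/- The domain Ω = {(x,y,z) ∈ ℝ³ : z < x y²} admits no uniformly C² defining function: there do not exist a neighborhood U of ∂Ω, constants C₁, C₂ > 0, and a C² function ρ on U with Ω ∩ U = {ρ < 0}, |∇ρ| > C₁ on U, and ‖ρ‖_{C²(U)} < C₂. -/

import Mathlib

open InnerProductSpace

noncomputable abbrev myE (i : Fin 3) : EuclideanSpace ℝ (Fin 3) := EuclideanSpace.single i 1

lemma myS_isOpen : IsOpen {p : EuclideanSpace ℝ (Fin 3) | p 2 < p 0 * (p 1) ^ 2} := by
  apply isOpen_lt
  · exact PiLp.continuous_apply 2 _ (2 : Fin 3)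
  · exact ((PiLp.continuous_apply 2 _ (0 : Fin 3)).mul ((PiLp.continuous_apply 2 _ (1 : Fin 3)).pow 2))

lemma mem_frontier_of_graph (p : EuclideanSpace ℝ (Fin 3)) (hp : p 2 = p 0 * (p 1) ^ 2) :
    p ∈ frontier {p : EuclideanSpace ℝ (Fin 3) | p 2 < p 0 * (p 1) ^ 2} := by
  rw [myS_isOpen.frontier_eq]
  constructor
  · -- closure
    have htend : Filter.Tendsto (fun ε : ℝ => p - ε • myE 2) (nhdsWithin 0 (Set.Ioi 0)) (nhds p) := by
      have : Filter.Tendsto (fun ε : ℝ => p - ε • myE 2) (nhds 0) (nhds (p - (0:ℝ) • myE 2)) := by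
        exact (tendsto_const_nhds.sub ((continuous_id.smul continuous_const).tendsto 0))
      simpa using this.mono_left nhdsWithin_le_nhds
    refine mem_closure_of_tendsto htend ?_
    filter_upwards [self_mem_nhdsWithin] with ε (hε : 0 < ε)
    show (p - ε • myE 2) 2 < (p - ε • myE 2) 0 * ((p - ε • myE 2) 1) ^ 2
    simp [PiLp.sub_apply, PiLp.smul_apply, EuclideanSpace.single_apply, hp]
    linarith [hp]
  · intro h
    exact absurd h (by simp [hp])

theorem stmt0 :
    ¬ ∃ (U : Set (EuclideanSpace ℝ (Fin 3))) (ρ : EuclideanSpace ℝ (Fin 3) → ℝ) (C₁ C₂ : ℝ),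
      IsOpen U ∧
      frontier {p : EuclideanSpace ℝ (Fin 3) | p 2 < p 0 * (p 1) ^ 2} ⊆ U ∧
      0 < C₁ ∧ 0 < C₂ ∧
      ContDiffOn ℝ 2 ρ U ∧
      {p : EuclideanSpace ℝ (Fin 3) | p 2 < p 0 * (p 1) ^ 2} ∩ U = {p | ρ p < 0} ∩ U ∧
      (∀ x ∈ U, C₁ < ‖gradient ρ x‖) ∧
      (∀ x ∈ U, ∀ i : ℕ, i ≤ 2 → ‖iteratedFDeriv ℝ i ρ x‖ < C₂) := by
  rintro ⟨U, ρ, C₁, C₂, hU, hfr, hC₁, hC₂, hρ, hset, hgrad, hder⟩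
  set S := {p : EuclideanSpace ℝ (Fin 3) | p 2 < p 0 * (p 1) ^ 2} with hSdef
  -- ρ vanishes on the graph
  have hzero : ∀ p : EuclideanSpace ℝ (Fin 3), p 2 = p 0 * (p 1) ^ 2 → ρ p = 0 := by
    intro p hp
    have hpf := mem_frontier_of_graph p hp
    have hpU : p ∈ U := hfr hpf
    have hnotS : p ∉ S := by simp [hSdef, hp]
    have hcl : p ∈ closure S := frontier_subset_closure hpf
    rcases lt_trichotomy (ρ p) 0 with h | h | h
    · exfalso
      have : p ∈ S ∩ U := by rw [hset]; exact ⟨h, hpU⟩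
      exact hnotS this.1
    · exact h
    · exfalso
      have hcont : ContinuousAt ρ p :=
        (hρ.continuousOn.continuousAt (hU.mem_nhds hpU))
      have hev : ρ ⁻¹' Set.Ioi 0 ∈ nhds p := hcont (isOpen_Ioi.mem_nhds h)
      have hmem : (U ∩ ρ ⁻¹' Set.Ioi 0) ∩ S ≠ ∅ := by
        rw [← Set.nonempty_iff_ne_empty]
        exact mem_closure_iff_nhds.1 hcl _ (Filter.inter_mem (hU.mem_nhds hpU) hev)
      rcases Set.nonempty_iff_ne_empty.2 hmem with ⟨q, ⟨⟨hqU, hqpos⟩, hqS⟩⟩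
      have : q ∈ {p | ρ p < 0} ∩ U := by rw [← hset]; exact ⟨hqS, hqU⟩
      have hneg : ρ q < 0 := this.1
      exact absurd hneg (not_lt.2 (le_of_lt hqpos))
  -- the point
  set x : ℝ := C₂ / C₁ with hxdef
  have hx : 0 < x := div_pos hC₂ hC₁
  set p : EuclideanSpace ℝ (Fin 3) := x • myE 0 with hpdef
  have hpcoord0 : p 0 = x := by simp [hpdef, PiLp.smul_apply, EuclideanSpace.single_apply]
  have hpcoord1 : p 1 = 0 := by simp [hpdef, PiLp.smul_apply, EuclideanSpace.single_apply]
  have hpcoord2 : p 2 = 0 := by simp [hpdef, PiLp.smul_apply, EuclideanSpace.single_apply]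
  have hpg : p 2 = p 0 * (p 1) ^ 2 := by rw [hpcoord0, hpcoord1, hpcoord2]; ring
  have hpU : p ∈ U := hfr (mem_frontier_of_graph p hpg)
  have hρ2 : ContDiffAt ℝ 2 ρ p := hρ.contDiffAt (hU.mem_nhds hpU)
  have hρd : DifferentiableAt ℝ ρ p := hρ2.differentiableAt (by norm_num)
  set D : EuclideanSpace ℝ (Fin 3) →L[ℝ] ℝ := fderiv ℝ ρ p with hDdef
  -- the curve γ t = (x, t, x t²)
  set γ : ℝ → EuclideanSpace ℝ (Fin 3) :=
    fun t => x • myE 0 + t • myE 1 + (x * t ^ 2) • myE 2 with hγdef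
  have hγ0 : γ 0 = p := by simp [hγdef, hpdef]
  have hγgraph : ∀ t : ℝ, (γ t) 2 = (γ t) 0 * ((γ t) 1) ^ 2 := by
    intro t
    simp [hγdef, PiLp.add_apply, PiLp.smul_apply, EuclideanSpace.single_apply]
  have hγU : ∀ t : ℝ, γ t ∈ U := fun t => hfr (mem_frontier_of_graph _ (hγgraph t))
  have hγzero : ∀ t : ℝ, ρ (γ t) = 0 := fun t => hzero _ (hγgraph t)
  set w : ℝ → EuclideanSpace ℝ (Fin 3) := fun t => myE 1 + (2 * x * t) • myE 2 with hwdef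
  have hγderiv : ∀ t : ℝ, HasDerivAt γ (w t) t := by
    intro t
    have h1 : HasDerivAt (fun s : ℝ => s • myE 1) ((1:ℝ) • myE 1) t :=
      (hasDerivAt_id t).smul_const (myE 1)
    have h2 : HasDerivAt (fun s : ℝ => (x * s ^ 2) • myE 2) ((x * (2 * t ^ 1)) • myE 2) t :=
      (((hasDerivAt_pow 2 t)).const_mul x).smul_const (myE 2)
    have := ((hasDerivAt_const t (x • myE 0)).add h1).add h2
    rw [show w t = 0 + (1:ℝ) • myE 1 + (x * (2 * t ^ 1)) • myE 2 by simp only [hwdef]; module]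
    exact this
  -- first derivatives along γ vanish
  have hk : ∀ t : ℝ, fderiv ℝ ρ (γ t) (w t) = 0 := by
    intro t
    have hd : DifferentiableAt ℝ ρ (γ t) :=
      (hρ.contDiffAt (hU.mem_nhds (hγU t))).differentiableAt (by norm_num)
    have hcomp : HasDerivAt (fun s => ρ (γ s)) (fderiv ℝ ρ (γ t) (w t)) t :=
      hd.hasFDerivAt.comp_hasDerivAt t (hγderiv t)
    have : (fun s => ρ (γ s)) = fun _ => (0:ℝ) := funext hγzero
    rw [this] at hcomp
    exact hcomp.unique (hasDerivAt_const t 0)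
  -- D (E 1) = 0
  have hDE1 : D (myE 1) = 0 := by
    have := hk 0
    rw [hγ0] at this
    simp [hwdef] at this ⊢; exact this
  -- D (E 0) = 0 : curve t ↦ t • E 0
  have hDE0 : D (myE 0) = 0 := by
    have hα : HasDerivAt (fun t : ℝ => t • myE 0) ((1:ℝ) • myE 0) x :=
      (hasDerivAt_id x).smul_const (myE 0)
    have hρf : HasFDerivAt ρ D ((fun t : ℝ => t • myE 0) x) := by
      show HasFDerivAt ρ D (x • myE 0)
      rw [← hpdef]; exact hρd.hasFDerivAt
    have hcomp : HasDerivAt (fun t : ℝ => ρ (t • myE 0)) (D ((1:ℝ) • myE 0)) x :=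
      hρf.comp_hasDerivAt x hα
    have hconst : (fun t : ℝ => ρ (t • myE 0)) = fun _ => (0:ℝ) := by
      funext t
      apply hzero
      simp [PiLp.smul_apply, EuclideanSpace.single_apply]
    rw [hconst] at hcomp
    have := hcomp.unique (hasDerivAt_const x 0)
    simpa using this
  -- second derivative relation
  have hG : ContDiffAt ℝ 1 (fderiv ℝ ρ) p := hρ2.fderiv_right (by norm_num)
  have hGd : DifferentiableAt ℝ (fderiv ℝ ρ) p := hG.differentiableAt (by norm_num)
  have hGf : HasFDerivAt (fderiv ℝ ρ) (fderiv ℝ (fderiv ℝ ρ) p) (γ 0) := by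
    rw [hγ0]; exact hGd.hasFDerivAt
  have hGc : HasDerivAt (fun t => fderiv ℝ ρ (γ t)) (fderiv ℝ (fderiv ℝ ρ) p (w 0)) 0 :=
    hGf.comp_hasDerivAt 0 (hγderiv 0)
  have hwderiv : HasDerivAt w ((2 * x) • myE 2) 0 := by
    have h2 : HasDerivAt (fun s : ℝ => (2 * x * s) • myE 2) ((2 * x * 1) • myE 2) 0 := by
      exact (((hasDerivAt_id (0:ℝ)).const_mul (2 * x))).smul_const (myE 2)
    have := (hasDerivAt_const (0:ℝ) (myE 1)).add h2
    simp [hwdef] at this ⊢; simpa using h2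
  have hkderiv : HasDerivAt (fun t => fderiv ℝ ρ (γ t) (w t))
      (fderiv ℝ (fderiv ℝ ρ) p (w 0) (w 0) + fderiv ℝ ρ (γ 0) ((2 * x) • myE 2)) 0 :=
    hGc.clm_apply hwderiv
  have hkzero : (fun t => fderiv ℝ ρ (γ t) (w t)) = fun _ => (0:ℝ) := funext hk
  rw [hkzero] at hkderiv
  have hrel : fderiv ℝ (fderiv ℝ ρ) p (w 0) (w 0) + fderiv ℝ ρ (γ 0) ((2 * x) • myE 2) = 0 :=
    (hkderiv.unique (hasDerivAt_const 0 0)).symm ▸ rfl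
  have hw0 : w 0 = myE 1 := by simp [hwdef]
  rw [hw0, hγ0] at hrel
  have hA : fderiv ℝ (fderiv ℝ ρ) p (myE 1) (myE 1) = -(2 * x * D (myE 2)) := by
    have : fderiv ℝ ρ p ((2 * x) • myE 2) = (2 * x) * D (myE 2) := by
      rw [hDdef]; simp [smul_eq_mul]
    rw [this] at hrel; linarith
  -- bound on second derivative
  have hAbound : |fderiv ℝ (fderiv ℝ ρ) p (myE 1) (myE 1)| < C₂ := by
    have heq : fderiv ℝ (fderiv ℝ ρ) p (myE 1) (myE 1)
        = iteratedFDeriv ℝ 2 ρ p ![myE 1, myE 1] := by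
      rw [iteratedFDeriv_two_apply]; rfl
    have hle : ‖iteratedFDeriv ℝ 2 ρ p ![myE 1, myE 1]‖
        ≤ ‖iteratedFDeriv ℝ 2 ρ p‖ * ∏ i : Fin 2, ‖(![myE 1, myE 1]) i‖ :=
      (iteratedFDeriv ℝ 2 ρ p).le_opNorm _
    have hprod : (∏ i : Fin 2, ‖(![myE 1, myE 1] : Fin 2 → EuclideanSpace ℝ (Fin 3)) i‖) = 1 := by
      simp [Fin.prod_univ_two, myE]
    rw [hprod, mul_one] at hle
    calc |fderiv ℝ (fderiv ℝ ρ) p (myE 1) (myE 1)| = ‖iteratedFDeriv ℝ 2 ρ p ![myE 1, myE 1]‖ := by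
          rw [heq]; exact (Real.norm_eq_abs _).symm
      _ ≤ ‖iteratedFDeriv ℝ 2 ρ p‖ := hle
      _ < C₂ := hder p hpU 2 le_rfl
  -- gradient coordinates
  have hgradcoord : ∀ i : Fin 3, gradient ρ p i = D (myE i) := by
    intro i
    have : (inner ℝ (gradient ρ p) (myE i) : ℝ) = D (myE i) := by
      rw [gradient, hDdef]
      exact toDual_symm_apply
    rw [← this]
    have := EuclideanSpace.inner_single_right (𝕜 := ℝ) i 1 (gradient ρ p)
    simp only [one_mul, RCLike.conj_to_real, myE] at this
    exact this.symm
  have hgnorm : ‖gradient ρ p‖ = |D (myE 2)| := by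
    rw [EuclideanSpace.norm_eq, Fin.sum_univ_three, hgradcoord 0, hgradcoord 1, hgradcoord 2,
      hDE0, hDE1]
    simp [Real.norm_eq_abs, sq_abs, Real.sqrt_sq_eq_abs]
  have hglow : C₁ < |D (myE 2)| := by rw [← hgnorm]; exact hgrad p hpU
  -- final contradiction
  have h1 : |(-(2 * x * D (myE 2)))| < C₂ := hA ▸ hAbound
  rw [abs_neg, abs_mul, abs_of_pos (by positivity : (0:ℝ) < 2 * x)] at h1
  have h2 : 2 * x * C₁ ≤ 2 * x * |D (myE 2)| :=
    mul_le_mul_of_nonneg_left (le_of_lt hglow) (by positivity)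
  have h3 : 2 * x * C₁ = 2 * C₂ := by
    rw [hxdef]; field_simp
  linarith
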